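/- arXiv:1411.4627 — 6 statements merged into one kernel-verified Lean document; each statement's English description precedes it below -/
import Mathlib

section
/- As ω₀ → 0⁺, g_{1,ω₀}(x) converges pointwise for each x ∈ [0,1] to the Hermite cubic 2x³ - 3x² + 1 = (2x+1)(x-1)². -/
open Real Filter

private noncomputable def gN (x t : ℝ) : ℝ :=
  Real.sin (t / 2) - t * (1 - x) * Real.cos (t / 2) + Real.sin (t / 2 - t * x)

private noncomputable def gN1 (x t : ℝ) : ℝ :=
  (x - 1 / 2) * Real.cos (t / 2) + (1 - x) * t / 2 * Real.sin (t / 2)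
    + (1 / 2 - x) * Real.cos (t / 2 - t * x)

private noncomputable def gN2 (x t : ℝ) : ℝ :=
  (3 / 4 - x) * Real.sin (t / 2) + (1 - x) * t / 4 * Real.cos (t / 2)
    - (1 / 2 - x) ^ 2 * Real.sin (t / 2 - t * x)

private noncomputable def gN3 (x t : ℝ) : ℝ :=
  (3 / 4 - x) / 2 * Real.cos (t / 2) + (1 - x) / 4 * Real.cos (t / 2)
    - (1 - x) * t / 8 * Real.sin (t / 2) - (1 / 2 - x) ^ 3 * Real.cos (t / 2 - t * x)

private noncomputable def gS (t : ℝ) : ℝ := 2 * Real.sin (t / 2) - t * Real.cos (t / 2)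

private noncomputable def gS1 (t : ℝ) : ℝ := t / 2 * Real.sin (t / 2)

private noncomputable def gS2 (t : ℝ) : ℝ :=
  1 / 2 * Real.sin (t / 2) + t / 4 * Real.cos (t / 2)

private noncomputable def gS3 (t : ℝ) : ℝ :=
  1 / 2 * Real.cos (t / 2) - t / 8 * Real.sin (t / 2)

theorem g1_limit_cubic_hermite
    (g : ℝ → ℝ → ℝ)
    (hg : ∀ ω₀ x, g ω₀ x =
      1 - Real.sin (ω₀ / 2) / (2 * Real.sin (ω₀ / 2) - ω₀ * Real.cos (ω₀ / 2))
        + (ω₀ * Real.cos (ω₀ / 2) / (2 * Real.sin (ω₀ / 2) - ω₀ * Real.cos (ω₀ / 2))) * x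
        + Real.sin (ω₀ / 2 - ω₀ * x) / (2 * Real.sin (ω₀ / 2) - ω₀ * Real.cos (ω₀ / 2))) :
    ∀ x ∈ Set.Icc (0 : ℝ) 1,
      Tendsto (fun ω₀ => g ω₀ x) (nhdsWithin 0 (Set.Ioi 0))
        (nhds (2 * x ^ 3 - 3 * x ^ 2 + 1)) := by
  intro x hx
  -- basic derivative helpers
  have hd2 : ∀ t : ℝ, HasDerivAt (fun u : ℝ => u / 2) (1 / 2) t := fun t =>
    (hasDerivAt_id' (x := t)).div_const 2
  have hsin2 : ∀ t : ℝ, HasDerivAt (fun u : ℝ => Real.sin (u / 2)) (Real.cos (t / 2) * (1 / 2)) t :=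
    fun t => by have := (Real.hasDerivAt_sin (t / 2)).comp t (hd2 t); exact this
  have hcos2 : ∀ t : ℝ, HasDerivAt (fun u : ℝ => Real.cos (u / 2)) (-Real.sin (t / 2) * (1 / 2)) t :=
    fun t => by have := (Real.hasDerivAt_cos (t / 2)).comp t (hd2 t); exact this
  have hlin : ∀ t : ℝ, HasDerivAt (fun u : ℝ => u / 2 - u * x) (1 / 2 - 1 * x) t := fun t =>
    (hd2 t).sub ((hasDerivAt_id' (x := t)).mul_const x)
  have hsinm : ∀ t : ℝ, HasDerivAt (fun u : ℝ => Real.sin (u / 2 - u * x))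
      (Real.cos (t / 2 - t * x) * (1 / 2 - 1 * x)) t :=
    fun t => by have := (Real.hasDerivAt_sin (t / 2 - t * x)).comp t (hlin t); exact this
  have hcosm : ∀ t : ℝ, HasDerivAt (fun u : ℝ => Real.cos (u / 2 - u * x))
      (-Real.sin (t / 2 - t * x) * (1 / 2 - 1 * x)) t :=
    fun t => by have := (Real.hasDerivAt_cos (t / 2 - t * x)).comp t (hlin t); exact this
  -- derivative chains
  have hdN : ∀ t : ℝ, HasDerivAt (gN x) (gN1 x t) t := by
    intro t
    have h := ((hsin2 t).sub (((hasDerivAt_id' (x := t)).mul_const (1 - x)).mul (hcos2 t))).add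
      (hsinm t)
    have : HasDerivAt (gN x) (Real.cos (t / 2) * (1 / 2) -
        (1 * (1 - x) * Real.cos (t / 2) + t * (1 - x) * (-Real.sin (t / 2) * (1 / 2))) +
        Real.cos (t / 2 - t * x) * (1 / 2 - 1 * x)) t := h
    convert this using 1
    simp only [gN1]
    ring
  have hdN1 : ∀ t : ℝ, HasDerivAt (gN1 x) (gN2 x t) t := by
    intro t
    have h := (((hcos2 t).const_mul (x - 1 / 2)).add
      (((((hasDerivAt_id' (x := t)).const_mul (1 - x)).div_const 2)).mul (hsin2 t))).add
      ((hcosm t).const_mul (1 / 2 - x))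
    have : HasDerivAt (gN1 x) ((x - 1 / 2) * (-Real.sin (t / 2) * (1 / 2)) +
        ((1 - x) * 1 / 2 * Real.sin (t / 2) + (1 - x) * t / 2 * (Real.cos (t / 2) * (1 / 2))) +
        (1 / 2 - x) * (-Real.sin (t / 2 - t * x) * (1 / 2 - 1 * x))) t := h
    convert this using 1
    simp only [gN2]
    ring
  have hdN2 : ∀ t : ℝ, HasDerivAt (gN2 x) (gN3 x t) t := by
    intro t
    have h := (((hsin2 t).const_mul (3 / 4 - x)).add
      (((((hasDerivAt_id' (x := t)).const_mul (1 - x)).div_const 4)).mul (hcos2 t))).sub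
      ((hsinm t).const_mul ((1 / 2 - x) ^ 2))
    have : HasDerivAt (gN2 x) ((3 / 4 - x) * (Real.cos (t / 2) * (1 / 2)) +
        ((1 - x) * 1 / 4 * Real.cos (t / 2) + (1 - x) * t / 4 * (-Real.sin (t / 2) * (1 / 2))) -
        (1 / 2 - x) ^ 2 * (Real.cos (t / 2 - t * x) * (1 / 2 - 1 * x))) t := h
    convert this using 1
    simp only [gN3]
    ring
  have hdS : ∀ t : ℝ, HasDerivAt gS (gS1 t) t := by
    intro t
    have h := ((hsin2 t).const_mul 2).sub ((hasDerivAt_id' (x := t)).mul (hcos2 t))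
    have : HasDerivAt gS (2 * (Real.cos (t / 2) * (1 / 2)) -
        (1 * Real.cos (t / 2) + t * (-Real.sin (t / 2) * (1 / 2)))) t := h
    convert this using 1
    simp only [gS1]
    ring
  have hdS1 : ∀ t : ℝ, HasDerivAt gS1 (gS2 t) t := by
    intro t
    have h := (hd2 t).mul (hsin2 t)
    have : HasDerivAt gS1 (1 / 2 * Real.sin (t / 2) + t / 2 * (Real.cos (t / 2) * (1 / 2))) t := h
    convert this using 1
    simp only [gS2]
    ring
  have hdS2 : ∀ t : ℝ, HasDerivAt gS2 (gS3 t) t := by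
    intro t
    have h := ((hsin2 t).const_mul (1 / 2)).add
      (((hasDerivAt_id' (x := t)).div_const 4).mul (hcos2 t))
    have : HasDerivAt gS2 (1 / 2 * (Real.cos (t / 2) * (1 / 2)) +
        (1 / 4 * Real.cos (t / 2) + t / 4 * (-Real.sin (t / 2) * (1 / 2)))) t := h
    convert this using 1
    simp only [gS3]
    ring
  -- positivity / nonvanishing on (0,1)
  have hsinpos : ∀ t ∈ Set.Ioo (0 : ℝ) 1, 0 < Real.sin (t / 2) := by
    intro t ht
    exact Real.sin_pos_of_pos_of_lt_pi (by linarith [ht.1]) (by nlinarith [ht.2, Real.pi_gt_three])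
  have hcospos : ∀ t ∈ Set.Ioo (0 : ℝ) 1, 0 < Real.cos (t / 2) := by
    intro t ht
    apply Real.cos_pos_of_mem_Ioo
    constructor
    · nlinarith [ht.1, Real.pi_gt_three]
    · nlinarith [ht.2, Real.pi_gt_three]
  have hS1ne : ∀ t ∈ Set.Ioo (0 : ℝ) 1, gS1 t ≠ 0 := by
    intro t ht
    have h1 := hsinpos t ht
    have ht0 := ht.1
    simp only [gS1]
    exact (mul_pos (by linarith) h1).ne'
  have hS2ne : ∀ t ∈ Set.Ioo (0 : ℝ) 1, gS2 t ≠ 0 := by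
    intro t ht
    have h1 := hsinpos t ht
    have h2 := hcospos t ht
    have ht0 := ht.1
    simp only [gS2]
    nlinarith
  have hS3ne : ∀ t ∈ Set.Ioo (0 : ℝ) 1, gS3 t ≠ 0 := by
    intro t ht
    have h1 : Real.sin (t / 2) ≤ t / 2 := Real.sin_le (by linarith [ht.1])
    have h2 : 1 - (t / 2) ^ 2 / 2 ≤ Real.cos (t / 2) := Real.one_sub_sq_div_two_le_cos
    have h3 : 0 ≤ Real.sin (t / 2) := (hsinpos t ht).le
    have ht0 := ht.1
    have ht1 := ht.2
    simp only [gS3]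
    nlinarith
  have hSpos : ∀ t ∈ Set.Ioo (0 : ℝ) 1, 0 < gS t := by
    intro t ht
    have h2 := hcospos t ht
    have htan : t / 2 < Real.tan (t / 2) :=
      Real.lt_tan (by linarith [ht.1]) (by nlinarith [ht.2, Real.pi_gt_three])
    rw [Real.tan_eq_sin_div_cos, lt_div_iff₀ h2] at htan
    simp only [gS]
    nlinarith
  -- tendsto-to-zero facts
  have hNz : Tendsto (gN x) (nhdsWithin 0 (Set.Ioi 0)) (nhds 0) := by
    have h := (hdN 0).continuousAt.tendsto
    have h0 : gN x 0 = 0 := by simp [gN]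
    rw [h0] at h
    exact h.mono_left nhdsWithin_le_nhds
  have hN1z : Tendsto (gN1 x) (nhdsWithin 0 (Set.Ioi 0)) (nhds 0) := by
    have h := (hdN1 0).continuousAt.tendsto
    have h0 : gN1 x 0 = 0 := by simp only [gN1]; norm_num
    rw [h0] at h
    exact h.mono_left nhdsWithin_le_nhds
  have hN2z : Tendsto (gN2 x) (nhdsWithin 0 (Set.Ioi 0)) (nhds 0) := by
    have h := (hdN2 0).continuousAt.tendsto
    have h0 : gN2 x 0 = 0 := by simp [gN2]
    rw [h0] at h
    exact h.mono_left nhdsWithin_le_nhds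
  have hSz : Tendsto gS (nhdsWithin 0 (Set.Ioi 0)) (nhds 0) := by
    have h := (hdS 0).continuousAt.tendsto
    have h0 : gS 0 = 0 := by simp [gS]
    rw [h0] at h
    exact h.mono_left nhdsWithin_le_nhds
  have hS1z : Tendsto gS1 (nhdsWithin 0 (Set.Ioi 0)) (nhds 0) := by
    have h := (hdS1 0).continuousAt.tendsto
    have h0 : gS1 0 = 0 := by simp [gS1]
    rw [h0] at h
    exact h.mono_left nhdsWithin_le_nhds
  have hS2z : Tendsto gS2 (nhdsWithin 0 (Set.Ioi 0)) (nhds 0) := by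
    have h := (hdS2 0).continuousAt.tendsto
    have h0 : gS2 0 = 0 := by simp [gS2]
    rw [h0] at h
    exact h.mono_left nhdsWithin_le_nhds
  -- base limit via continuity
  have hcN3 : ContinuousAt (gN3 x) 0 := by
    unfold gN3
    fun_prop
  have hcS3 : ContinuousAt gS3 0 := by
    unfold gS3
    fun_prop
  have hS30 : gS3 0 ≠ 0 := by
    simp [gS3]
  have T3 : Tendsto (fun t => gN3 x t / gS3 t) (nhdsWithin 0 (Set.Ioi 0))
      (nhds (2 * x ^ 3 - 3 * x ^ 2 + 1)) := by
    have h : Tendsto (fun t => gN3 x t / gS3 t) (nhds 0) (nhds (gN3 x 0 / gS3 0)) :=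
      hcN3.tendsto.div hcS3.tendsto hS30
    have e1 : gN3 x 0 = (3 / 4 - x) / 2 + (1 - x) / 4 - (1 / 2 - x) ^ 3 := by
      simp only [gN3]
      norm_num
    have e2 : gS3 0 = 1 / 2 := by
      simp only [gS3]
      norm_num
    have hval : gN3 x 0 / gS3 0 = 2 * x ^ 3 - 3 * x ^ 2 + 1 := by
      rw [e1, e2]
      ring
    rw [hval] at h
    exact h.mono_left nhdsWithin_le_nhds
  have T2 : Tendsto (fun t => gN2 x t / gS2 t) (nhdsWithin 0 (Set.Ioi 0))
      (nhds (2 * x ^ 3 - 3 * x ^ 2 + 1)) :=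
    HasDerivAt.lhopital_zero_right_on_Ioo zero_lt_one (fun t _ => hdN2 t) (fun t _ => hdS2 t)
      hS3ne hN2z hS2z T3
  have T1 : Tendsto (fun t => gN1 x t / gS1 t) (nhdsWithin 0 (Set.Ioi 0))
      (nhds (2 * x ^ 3 - 3 * x ^ 2 + 1)) :=
    HasDerivAt.lhopital_zero_right_on_Ioo zero_lt_one (fun t _ => hdN1 t) (fun t _ => hdS1 t)
      hS2ne hN1z hS1z T2
  have T0 : Tendsto (fun t => gN x t / gS t) (nhdsWithin 0 (Set.Ioi 0))
      (nhds (2 * x ^ 3 - 3 * x ^ 2 + 1)) :=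
    HasDerivAt.lhopital_zero_right_on_Ioo zero_lt_one (fun t _ => hdN t) (fun t _ => hdS t)
      hS1ne hNz hSz T1
  -- relate g to gN / gS
  have hmem : Set.Ioo (0 : ℝ) 1 ∈ nhdsWithin (0 : ℝ) (Set.Ioi 0) :=
    Ioo_mem_nhdsGT_of_mem (by constructor <;> norm_num)
  have hev : (fun t => gN x t / gS t) =ᶠ[nhdsWithin (0 : ℝ) (Set.Ioi 0)] (fun t => g t x) := by
    filter_upwards [hmem] with t ht
    have hs : 2 * Real.sin (t / 2) - t * Real.cos (t / 2) ≠ 0 := by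
      have := (hSpos t ht).ne'
      simpa [gS] using this
    rw [hg]
    simp only [gN, gS]
    field_simp
    ring
  exact T0.congr' hev
end

section
/- For every x ∈ ℝ, φ_{1,ω₀}(x) + φ_{1,ω₀}(x−1) = 1 for x ∈ [0,1]; more generally, ∑_{n∈ℤ} φ_{1,ω₀}(x−n) = 1 (partition of unity), where at most two terms are nonzero since φ_{1,ω₀} is supported in [−1,1]. -/
open Real

theorem phi1_partition_of_unity (ω₀ : ℝ) (hω₀ : ω₀ ∈ Set.Ioo 0 π)
    (s : ℝ) (hs : s = 2 * Real.sin (ω₀ / 2) - ω₀ * Real.cos (ω₀ / 2))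
    (g φ₁ : ℝ → ℝ)
    (hg : ∀ x, g x = Set.indicator (Set.Icc (0 : ℝ) 1)
      (fun y => 1 - Real.sin (ω₀ / 2) / s + (ω₀ * Real.cos (ω₀ / 2) / s) * y
        + Real.sin (ω₀ / 2 - ω₀ * y) / s) x)
    (hφ : ∀ x, φ₁ x = if 0 ≤ x then g x else g (-x)) :
    (∀ x ∈ Set.Icc (0 : ℝ) 1, φ₁ x + φ₁ (x - 1) = 1) ∧
    (∀ x : ℝ, ∑' n : ℤ, φ₁ (x - n) = 1) := by
  obtain ⟨hω1, hω2⟩ := hω₀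
  have ht1 : 0 < ω₀ / 2 := by linarith
  have ht2 : ω₀ / 2 < π / 2 := by linarith
  have hcos : 0 < Real.cos (ω₀ / 2) :=
    Real.cos_pos_of_mem_Ioo ⟨by linarith [Real.pi_pos], ht2⟩
  have htan : ω₀ / 2 < Real.tan (ω₀ / 2) := Real.lt_tan ht1 ht2
  have hsin : ω₀ / 2 * Real.cos (ω₀ / 2) < Real.sin (ω₀ / 2) := by
    rw [Real.tan_eq_sin_div_cos] at htan
    calc ω₀ / 2 * Real.cos (ω₀ / 2)
        < Real.sin (ω₀ / 2) / Real.cos (ω₀ / 2) * Real.cos (ω₀ / 2) := by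
          exact mul_lt_mul_of_pos_right htan hcos
      _ = Real.sin (ω₀ / 2) := by field_simp
  have hspos : 0 < s := by rw [hs]; nlinarith
  have hs0 : s ≠ 0 := ne_of_gt hspos
  have hkey : ∀ x ∈ Set.Icc (0 : ℝ) 1, g x + g (1 - x) = 1 := by
    intro x hx
    have hx' : (1 - x) ∈ Set.Icc (0 : ℝ) 1 := ⟨by linarith [hx.2], by linarith [hx.1]⟩
    rw [hg, hg, Set.indicator_of_mem hx, Set.indicator_of_mem hx']
    have hsin2 : Real.sin (ω₀ / 2 - ω₀ * (1 - x)) = - Real.sin (ω₀ / 2 - ω₀ * x) := by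
      rw [show ω₀ / 2 - ω₀ * (1 - x) = -(ω₀ / 2 - ω₀ * x) by ring, Real.sin_neg]
    rw [hsin2]
    field_simp
    rw [hs]
    ring
  have hg0 : g 0 = 1 := by
    rw [hg, Set.indicator_of_mem (by constructor <;> norm_num)]
    simp only [mul_zero, sub_zero]
    field_simp
    ring
  have hg1 : g 1 = 0 := by
    have h := hkey 0 ⟨le_refl 0, zero_le_one⟩
    rw [hg0] at h; simp only [sub_zero] at h; linarith
  have hgz : ∀ y : ℝ, 1 ≤ y → g y = 0 := by
    intro y hy
    rcases eq_or_lt_of_le hy with h | h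
    · rw [← h]; exact hg1
    · rw [hg, Set.indicator_of_notMem]
      exact fun hmem => absurd hmem.2 (not_le.mpr h)
  have hφz : ∀ y : ℝ, 1 ≤ |y| → φ₁ y = 0 := by
    intro y hy
    rw [hφ]; split_ifs with h
    · exact hgz y (by rwa [abs_of_nonneg h] at hy)
    · exact hgz (-y) (by rwa [abs_of_neg (not_le.mp h)] at hy)
  have hpart1 : ∀ x ∈ Set.Icc (0 : ℝ) 1, φ₁ x + φ₁ (x - 1) = 1 := by
    intro x hx
    have h1 : φ₁ x = g x := by rw [hφ, if_pos hx.1]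
    have h2 : φ₁ (x - 1) = g (1 - x) := by
      rw [hφ]; split_ifs with h
      · have hx1 : x = 1 := le_antisymm hx.2 (by linarith)
        rw [hx1]
      · congr 1; ring
    rw [h1, h2]; exact hkey x hx
  refine ⟨hpart1, fun x => ?_⟩
  set n₀ := ⌊x⌋ with hn
  have hx0 : (n₀ : ℝ) ≤ x := Int.floor_le x
  have hx1 : x < n₀ + 1 := Int.lt_floor_add_one x
  have hvanish : ∀ n : ℤ, n ∉ ({n₀, n₀ + 1} : Finset ℤ) → φ₁ (x - n) = 0 := by
    intro n hn'
    simp only [Finset.mem_insert, Finset.mem_singleton] at hn'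
    push_neg at hn'
    apply hφz
    rcases le_or_gt n (n₀ - 1) with h | h
    · have : (n : ℝ) ≤ (n₀ : ℝ) - 1 := by exact_mod_cast h
      rw [le_abs]; left; linarith
    · have h2 : n₀ + 2 ≤ n := by omega
      have : (n₀ : ℝ) + 2 ≤ (n : ℝ) := by exact_mod_cast h2
      rw [le_abs]; right; linarith
  rw [tsum_eq_sum hvanish, Finset.sum_pair (by omega : n₀ ≠ n₀ + 1)]
  have := hpart1 (x - n₀) ⟨by linarith, by linarith⟩
  have heq : x - ((n₀ : ℤ) + 1 : ℤ) = (x - n₀) - 1 := by push_cast; ring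
  rw [heq]
  linarith [this]
end

section
/- For x ∈ [0,1], the identity cos(ω₀ x) = cos(0)·φ_{1,ω₀}(x) − ω₀ sin(0)·φ_{2,ω₀}(x) + cos(ω₀)·φ_{1,ω₀}(x−1) − ω₀ sin(ω₀)·φ_{2,ω₀}(x−1) holds; i.e., the Hermite pair (φ_{1,ω₀}, φ_{2,ω₀}) reproduces cos(ω₀ x) on [0,1] from its values and derivatives at 0 and 1. -/
open Real
set_option maxHeartbeats 4000000

theorem hermite_reproduces_cos (ω₀ : ℝ) (hω₀ : ω₀ ∈ Set.Ioo 0 π)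
    (s t u v : ℝ)
    (hs : s = 2 * Real.sin (ω₀ / 2) - ω₀ * Real.cos (ω₀ / 2))
    (ht : t = 2 * Real.sin (ω₀ / 2) + ω₀ * Real.cos (ω₀ / 2))
    (hu : u = ω₀ * Real.sin ω₀ - 2 * (1 - Real.cos ω₀))
    (hv : v = 2 * Real.sin ω₀ + ω₀ * (1 - Real.cos ω₀))
    (hs0 : s ≠ 0) (ht0 : t ≠ 0) (hu0 : u ≠ 0)
    (g₁ g₂ φ₁ φ₂ : ℝ → ℝ)
    (hg₁ : ∀ x, g₁ x = 1 - Real.sin (ω₀ / 2) / s + (ω₀ * Real.cos (ω₀ / 2) / s) * x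
        + Real.sin (ω₀ / 2 - ω₀ * x) / s)
    (hg₂ : ∀ x, g₂ x = (Real.sin ω₀ - ω₀ * Real.cos ω₀) / (ω₀ * u)
        + (Real.sin (ω₀ / 2) / s) * x
        - (ω₀ ^ 2 * Real.cos (ω₀ / 2) * Real.cos (ω₀ * (1 - x))
            + Real.sin (ω₀ / 2) * (Real.sin (ω₀ * x) * u - Real.cos (ω₀ * x) * v))
          / (2 * ω₀ * Real.sin (ω₀ / 2) * s * t))
    (hφ₁ : ∀ x, φ₁ x = Set.indicator (Set.Icc (-1 : ℝ) 1) (fun y => g₁ |y|) x)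
    (hφ₂ : ∀ x, φ₂ x = Set.indicator (Set.Icc (-1 : ℝ) 1)
        (fun y => Real.sign y * g₂ |y|) x) :
    ∀ x ∈ Set.Icc (0 : ℝ) 1,
      Real.cos (ω₀ * x) =
        Real.cos 0 * φ₁ x - ω₀ * Real.sin 0 * φ₂ x
        + Real.cos ω₀ * φ₁ (x - 1) - ω₀ * Real.sin ω₀ * φ₂ (x - 1) := by
  obtain ⟨hω0, hωπ⟩ := hω₀
  subst hs ht hu hv
  intro x hx
  obtain ⟨hx0, hx1⟩ := hx
  have hmem1 : x ∈ Set.Icc (-1:ℝ) 1 := ⟨by linarith, hx1⟩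
  have hmem2 : x - 1 ∈ Set.Icc (-1:ℝ) 1 := ⟨by linarith, by linarith⟩
  have habs1 : |x| = x := abs_of_nonneg hx0
  have habs2 : |x - 1| = 1 - x := by rw [abs_of_nonpos (by linarith)]; ring
  have hφ1x : φ₁ x = g₁ x := by rw [hφ₁, Set.indicator_of_mem hmem1, habs1]
  have hφ1x1 : φ₁ (x-1) = g₁ (1-x) := by
    rw [hφ₁, Set.indicator_of_mem hmem2, habs2]
  have hφ2x1 : φ₂ (x-1) = Real.sign (x-1) * g₂ (1-x) := by
    rw [hφ₂, Set.indicator_of_mem hmem2, habs2]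
  have hσ : Real.sin (ω₀/2) > 0 :=
    Real.sin_pos_of_pos_of_lt_pi (by linarith) (by linarith [Real.pi_pos])
  have hσ0 : Real.sin (ω₀/2) ≠ 0 := ne_of_gt hσ
  have hω : ω₀ ≠ 0 := ne_of_gt hω0
  have hcw := Real.cos_two_mul (ω₀/2)
  have hsw := Real.sin_two_mul (ω₀/2)
  rw [show 2*(ω₀/2) = ω₀ by ring] at hcw hsw
  have hpy : Real.sin (ω₀/2)^2 + Real.cos (ω₀/2)^2 = 1 := Real.sin_sq_add_cos_sq _
  rw [hφ1x, hφ1x1, hφ2x1, Real.sin_zero, Real.cos_zero]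
  rcases eq_or_lt_of_le hx1 with h1 | h1
  · subst h1
    rw [show (1:ℝ) - 1 = 0 by norm_num, Real.sign_zero, hg₁ 1, hg₁ 0,
      show ω₀/2 - ω₀*1 = -(ω₀/2) by ring, Real.sin_neg,
      show ω₀/2 - ω₀*0 = ω₀/2 by ring, mul_one]
    field_simp
    ring
  · rw [Real.sign_of_neg (by linarith : x - 1 < 0), hg₁, hg₁, hg₂]
    rw [show ω₀/2 - ω₀*(1-x) = ω₀*x - ω₀/2 by ring, show ω₀*(1-(1-x)) = ω₀*x by ring,
      show ω₀*(1-x) = ω₀ - ω₀*x by ring,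
      Real.sin_sub (ω₀*x) (ω₀/2), Real.sin_sub (ω₀/2) (ω₀*x),
      Real.cos_sub ω₀ (ω₀*x), Real.sin_sub ω₀ (ω₀*x)]
    rw [hcw, hsw] at hu0 ⊢
    set σ := Real.sin (ω₀/2) with hσdef
    set c := Real.cos (ω₀/2) with hcdef
    set C := Real.cos (ω₀*x) with hCdef
    set S := Real.sin (ω₀*x) with hSdef
    have hU : ω₀ * (2 * σ * c) - 2 * (1 - (2 * c ^ 2 - 1)) = -2*σ*(2*σ - ω₀*c) := by linear_combination 4*hpy
    rw [hU]
    simp only [mul_zero, zero_mul, sub_zero]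
    have hA : σ * 2 - ω₀ * c ≠ 0 := by intro h; apply hs0; linarith
    have hB : σ * 2 + ω₀ * c ≠ 0 := by intro h; apply ht0; linarith
    rw [← sub_eq_zero]
    field_simp
    linear_combination (4*σ*c^3*ω₀*C + -8*σ^2*c^2*C + -4*σ*c*ω₀ + 4*σ*c*ω₀*x + -4*σ*c*S + -2*c^2*ω₀*S + -2*c^2*ω₀^2 + 2*c^2*ω₀^2*x) * hpy
end

section
/- For x ∈ [0,1], the identity x = 0·φ_{1,ω₀}(x) + 1·φ_{2,ω₀}(x) + 1·φ_{1,ω₀}(x−1) + 1·φ_{2,ω₀}(x−1) holds, i.e., the exponential Hermite pair reproduces the linear monomial on [0,1]. -/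
open Real

theorem hermite_reproduces_linear (ω₀ : ℝ) (hω₀ : ω₀ ∈ Set.Ioo 0 π)
    (s t u v : ℝ)
    (hs : s = 2 * Real.sin (ω₀ / 2) - ω₀ * Real.cos (ω₀ / 2))
    (ht : t = 2 * Real.sin (ω₀ / 2) + ω₀ * Real.cos (ω₀ / 2))
    (hu : u = ω₀ * Real.sin ω₀ - 2 * (1 - Real.cos ω₀))
    (hv : v = 2 * Real.sin ω₀ + ω₀ * (1 - Real.cos ω₀))
    (hs0 : s ≠ 0) (ht0 : t ≠ 0) (hu0 : u ≠ 0) (hv0 : v ≠ 0)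
    (g₁ g₂ φ₁ φ₂ : ℝ → ℝ)
    (hg₁ : ∀ x, g₁ x = 1 - Real.sin (ω₀ / 2) / s + (ω₀ * Real.cos (ω₀ / 2) / s) * x
        + Real.sin (ω₀ / 2 - ω₀ * x) / s)
    (hg₂ : ∀ x, g₂ x = (Real.sin ω₀ - ω₀ * Real.cos ω₀) / (ω₀ * u)
        + (Real.sin (ω₀ / 2) / s) * x
        - (ω₀ ^ 2 * Real.cos (ω₀ / 2) * Real.cos (ω₀ * (1 - x))
            + Real.sin (ω₀ / 2) * (Real.sin (ω₀ * x) * u - Real.cos (ω₀ * x) * v))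
          / (2 * ω₀ * Real.sin (ω₀ / 2) * s * t))
    (hφ₁ : ∀ x, φ₁ x = Set.indicator (Set.Icc (-1 : ℝ) 1) (fun y => g₁ |y|) x)
    (hφ₂ : ∀ x, φ₂ x = Set.indicator (Set.Icc (-1 : ℝ) 1)
        (fun y => Real.sign y * g₂ |y|) x) :
    ∀ x ∈ Set.Icc (0 : ℝ) 1,
      x = 0 * φ₁ x + 1 * φ₂ x + 1 * φ₁ (x - 1) + 1 * φ₂ (x - 1) := by
  have hw0 : ω₀ ≠ 0 := ne_of_gt hω₀.1
  have hS0 : Real.sin (ω₀ / 2) ≠ 0 := by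
    apply ne_of_gt
    apply Real.sin_pos_of_pos_of_lt_pi <;> [linarith [hω₀.1]; linarith [hω₀.2, Real.pi_pos]]
  have e1 : Real.sin ω₀ = 2 * Real.sin (ω₀/2) * Real.cos (ω₀/2) := by
    have h := Real.sin_two_mul (ω₀/2)
    rw [show 2*(ω₀/2) = ω₀ by ring] at h
    linarith
  have e2 : Real.cos ω₀ = 1 - 2 * Real.sin (ω₀/2)^2 := by
    have h := Real.cos_two_mul (ω₀/2)
    rw [show 2*(ω₀/2) = ω₀ by ring] at h
    linear_combination h + 2 * Real.sin_sq_add_cos_sq (ω₀/2)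
  subst hs ht hu hv
  rw [e1, e2] at hu0 hv0
  have hu0' : ω₀ * (2 * Real.sin (ω₀/2) * Real.cos (ω₀/2)) - 2 * (2 * Real.sin (ω₀/2)^2) ≠ 0 := by
    intro h; exact hu0 (by linarith)
  have key : ∀ y : ℝ, g₂ y + g₁ (1-y) - g₂ (1-y) = y := by
    intro y
    have e4 : Real.sin (ω₀/2 - ω₀*(1-y)) = Real.sin (ω₀*y) * Real.cos (ω₀/2)
        - Real.cos (ω₀*y) * Real.sin (ω₀/2) := by
      rw [show ω₀/2 - ω₀*(1-y) = ω₀*y - ω₀/2 by ring, Real.sin_sub]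
    have e5 : Real.cos (ω₀*(1-y)) = Real.cos ω₀ * Real.cos (ω₀*y)
        + Real.sin ω₀ * Real.sin (ω₀*y) := by
      rw [show ω₀*(1-y) = ω₀ - ω₀*y by ring, Real.cos_sub]
    have e6 : Real.sin (ω₀*(1-y)) = Real.sin ω₀ * Real.cos (ω₀*y)
        - Real.cos ω₀ * Real.sin (ω₀*y) := by
      rw [show ω₀*(1-y) = ω₀ - ω₀*y by ring, Real.sin_sub]
    have e7 : ω₀ * (1 - (1-y)) = ω₀ * y := by ring
    rw [hg₂ y, hg₁ (1-y), hg₂ (1-y), e7, e4, e5, e6, e1, e2]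
    have hd : ω₀ * Real.sin (ω₀/2) * Real.cos (ω₀/2) - (1 - (1 - 2 * Real.sin (ω₀/2)^2)) ≠ 0 := by
      intro h; exact hu0' (by linear_combination 2 * h)
    field_simp [hu0', hd]
    linear_combination ((4)*Real.sin (ω₀/2)^4*Real.cos (ω₀/2)^1*Real.cos (ω₀*y)^1*ω₀^2 + (-8)*Real.sin (ω₀/2)^4*Real.cos (ω₀/2)^1*Real.sin (ω₀*y)^1*ω₀^1 + (-8)*Real.sin (ω₀/2)^5*Real.cos (ω₀*y)^1*ω₀^1 + (16)*Real.sin (ω₀/2)^5*Real.sin (ω₀*y)^1) * Real.sin_sq_add_cos_sq (ω₀/2)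
  have hz : g₂ 0 = 0 := by
    have c1 : ω₀ * (1 - (0:ℝ)) = ω₀ := by ring
    have c2 : ω₀ * (0:ℝ) = 0 := by ring
    rw [hg₂ 0, c1, c2, Real.sin_zero, Real.cos_zero, e1, e2]
    have hd : ω₀ * Real.sin (ω₀/2) * Real.cos (ω₀/2) - (1 - (1 - 2 * Real.sin (ω₀/2)^2)) ≠ 0 := by
      intro h; exact hu0' (by linear_combination 2 * h)
    field_simp [hu0', hd]
    linear_combination ((-2)*Real.sin (ω₀/2)^2*Real.cos (ω₀/2)^1*ω₀^2 + (4)*Real.sin (ω₀/2)^3*ω₀^1) * Real.sin_sq_add_cos_sq (ω₀/2)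
  intro x hx
  obtain ⟨hx0, hx1⟩ := hx
  have m1 : x ∈ Set.Icc (-1 : ℝ) 1 := ⟨by linarith, hx1⟩
  have m2 : x - 1 ∈ Set.Icc (-1 : ℝ) 1 := ⟨by linarith, by linarith⟩
  rw [hφ₁ x, hφ₂ x, hφ₁ (x-1), hφ₂ (x-1), Set.indicator_of_mem m1, Set.indicator_of_mem m1,
    Set.indicator_of_mem m2, Set.indicator_of_mem m2]

  rw [abs_of_nonneg hx0, abs_of_nonpos (by linarith : x - 1 ≤ 0),
    show -(x-1) = 1 - x by ring]
  rcases eq_or_lt_of_le hx0 with h0 | h0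
  · -- x = 0
    rw [← h0]
    have hsgn : Real.sign ((0:ℝ) - 1) = -1 := Real.sign_of_neg (by norm_num)
    rw [show ((0:ℝ)) - 1 = (0:ℝ) - 1 by ring] at hsgn
    rw [hsgn, Real.sign_zero]
    have hk := key 0
    rw [hz] at hk
    simp only [sub_zero] at hk ⊢
    norm_num
    linarith
  · rcases eq_or_lt_of_le hx1 with h1 | h1
    · -- x = 1
      rw [h1]
      rw [show (1:ℝ) - 1 = 0 by ring, Real.sign_zero, Real.sign_of_pos (by norm_num : (0:ℝ) < 1)]
      have hk := key 1
      rw [show (1:ℝ) - 1 = 0 by ring, hz] at hk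
      ring_nf
      ring_nf at hk
      linarith
    · rw [Real.sign_of_pos h0, Real.sign_of_neg (by linarith : x - 1 < 0)]
      have hk := key x
      linarith
end

section
/- The four exponential Bernstein basis functions b_{0,ω₀}, b_{1,ω₀}, b_{2,ω₀}, b_{3,ω₀} sum to 1 at every x ∈ [0,1] (partition of unity). -/
open Real

theorem bernstein_partition_of_unity (ω₀ : ℝ) (hω₀ : ω₀ ∈ Set.Ioo 0 π)
    (s : ℝ) (hs : s = 2 * Real.sin (ω₀ / 2) - ω₀ * Real.cos (ω₀ / 2))
    (hs0 : s ≠ 0) (hws : ω₀ - Real.sin ω₀ ≠ 0)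
    (b₀ b₁ b₂ b₃ : ℝ → ℝ)
    (hb₀ : ∀ x, b₀ x = (ω₀ * (1 - x) - Real.sin (ω₀ * (1 - x))) / (ω₀ - Real.sin ω₀))
    (hb₃ : ∀ x, b₃ x = (ω₀ * x - Real.sin (ω₀ * x)) / (ω₀ - Real.sin ω₀))
    (hb₂ : ∀ x, b₂ x = Real.sin (ω₀ / 2) / s
        - (2 * ω₀ * Real.sin (ω₀ / 2) ^ 3) / (s * (ω₀ - Real.sin ω₀)) * x
        + (1 / (ω₀ - Real.sin ω₀) + Real.cos (ω₀ / 2) / s) * Real.sin (ω₀ * x)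
        - (Real.sin (ω₀ / 2) / s) * Real.cos (ω₀ * x))
    (hb₁ : ∀ x, b₁ x = b₂ (1 - x)) :
    ∀ x ∈ Set.Icc (0 : ℝ) 1, b₀ x + b₁ x + b₂ x + b₃ x = 1 := by
  intro x hx
  have hpyth : Real.sin (ω₀ / 2) ^ 2 + Real.cos (ω₀ / 2) ^ 2 = 1 := Real.sin_sq_add_cos_sq _
  have hsin : Real.sin ω₀ = 2 * Real.sin (ω₀ / 2) * Real.cos (ω₀ / 2) := by
    rw [← Real.sin_two_mul]; ring_nf
  have h1 : ω₀ * (1 - x) = ω₀ - ω₀ * x := by ring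
  -- The cross terms cancel:
  have T : Real.cos (ω₀ / 2) * (Real.sin (ω₀ - ω₀ * x) + Real.sin (ω₀ * x))
      - Real.sin (ω₀ / 2) * (Real.cos (ω₀ - ω₀ * x) + Real.cos (ω₀ * x)) = 0 := by
    have e1 := Real.sin_sub (ω₀ - ω₀ * x) (ω₀ / 2)
    have e2 := Real.sin_sub (ω₀ * x) (ω₀ / 2)
    have e3 : Real.sin (ω₀ - ω₀ * x - ω₀ / 2) = - Real.sin (ω₀ * x - ω₀ / 2) := by
      rw [show ω₀ - ω₀ * x - ω₀ / 2 = -(ω₀ * x - ω₀ / 2) by ring, Real.sin_neg]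
    nlinarith [e1, e2, e3]
  have split : b₀ x + b₁ x + b₂ x + b₃ x
      = ω₀ / (ω₀ - Real.sin ω₀) + 2 * Real.sin (ω₀ / 2) / s
        - 2 * ω₀ * Real.sin (ω₀ / 2) ^ 3 / (s * (ω₀ - Real.sin ω₀))
        + (Real.cos (ω₀ / 2) * (Real.sin (ω₀ - ω₀ * x) + Real.sin (ω₀ * x))
           - Real.sin (ω₀ / 2) * (Real.cos (ω₀ - ω₀ * x) + Real.cos (ω₀ * x))) / s := by
    rw [hb₀, hb₁, hb₂, hb₂, hb₃, h1]
    field_simp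
    ring
  rw [split, T]
  rw [zero_div, add_zero]
  rw [hsin] at hws ⊢
  rw [hs] at hs0 ⊢
  field_simp
  linear_combination (-2 * ω₀ * Real.sin (ω₀ / 2)) * hpyth
end

section
/- The function g_{2,ω₀} in its explicit real form satisfies the boundary conditions g_{2,ω₀}(0) = 0, g_{2,ω₀}'(0) = 1, g_{2,ω₀}(1) = 0, and g_{2,ω₀}'(1) = 0. -/
set_option maxHeartbeats 1000000
open Real

lemma g2_key (w A B K S u v D a : ℝ) :
    HasDerivAt (fun x => A + B * x -
      (K * Real.cos (w * (1 - x)) + S * (Real.sin (w * x) * u - Real.cos (w * x) * v)) / D)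
    (B - (K * (Real.sin (w * (1 - a)) * w)
        + S * ((Real.cos (w * a) * w) * u + (Real.sin (w * a) * w) * v)) / D) a := by
  have h1 : HasDerivAt (fun x : ℝ => w * (1 - x)) (-w) a := by
    simpa using ((hasDerivAt_id a).const_sub 1).const_mul w
  have h2 : HasDerivAt (fun x : ℝ => w * x) w a := by
    simpa using (hasDerivAt_id a).const_mul w
  have hc : HasDerivAt (fun x => Real.cos (w * (1 - x))) (Real.sin (w * (1 - a)) * w) a := by
    simpa [Function.comp_def] using (Real.hasDerivAt_cos (w * (1 - a))).comp a h1
  have hsx : HasDerivAt (fun x => Real.sin (w * x)) (Real.cos (w * a) * w) a := by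
    simpa [Function.comp_def] using (Real.hasDerivAt_sin (w * a)).comp a h2
  have hcx : HasDerivAt (fun x => Real.cos (w * x)) (-(Real.sin (w * a) * w)) a := by
    simpa [Function.comp_def] using (Real.hasDerivAt_cos (w * a)).comp a h2
  have hmain : HasDerivAt (fun x => K * Real.cos (w * (1 - x)) + S * (Real.sin (w * x) * u - Real.cos (w * x) * v))
      (K * (Real.sin (w * (1 - a)) * w) + S * ((Real.cos (w * a) * w) * u + (Real.sin (w * a) * w) * v)) a := by
    have := ((hc.const_mul K).add (((hsx.mul_const u).sub (hcx.mul_const v)).const_mul S))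
    refine this.congr_deriv ?_
    ring
  exact ((hasDerivAt_const a A).add ((hasDerivAt_id a).const_mul B)).sub (hmain.div_const D) |>.congr_deriv (by ring)
section MainProof
theorem g2_boundary_conditions (ω₀ : ℝ) (hω₀ : ω₀ ∈ Set.Ioo 0 π)
    (s t u v : ℝ)
    (hs : s = 2 * Real.sin (ω₀ / 2) - ω₀ * Real.cos (ω₀ / 2))
    (ht : t = 2 * Real.sin (ω₀ / 2) + ω₀ * Real.cos (ω₀ / 2))
    (hu : u = ω₀ * Real.sin ω₀ - 2 * (1 - Real.cos ω₀))
    (hv : v = 2 * Real.sin ω₀ + ω₀ * (1 - Real.cos ω₀))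
    (hs0 : s ≠ 0) (ht0 : t ≠ 0) (hu0 : u ≠ 0) (hv0 : v ≠ 0)
    (g : ℝ → ℝ)
    (hg : ∀ x, g x = (Real.sin ω₀ - ω₀ * Real.cos ω₀) / (ω₀ * u)
        + (Real.sin (ω₀ / 2) / s) * x
        - (ω₀ ^ 2 * Real.cos (ω₀ / 2) * Real.cos (ω₀ * (1 - x))
            + Real.sin (ω₀ / 2) * (Real.sin (ω₀ * x) * u - Real.cos (ω₀ * x) * v))
          / (2 * ω₀ * Real.sin (ω₀ / 2) * s * t)) :
    g 0 = 0 ∧ HasDerivAt g 1 0 ∧ g 1 = 0 ∧ HasDerivAt g 0 1 := by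
  obtain ⟨hp, hq⟩ := hω₀
  have hw : ω₀ ≠ 0 := ne_of_gt hp
  have hS : Real.sin (ω₀ / 2) ≠ 0 :=
    ne_of_gt (Real.sin_pos_of_pos_of_lt_pi (by linarith) (by linarith [Real.pi_pos]))
  have hgf : g = fun x => (Real.sin ω₀ - ω₀ * Real.cos ω₀) / (ω₀ * u)
        + (Real.sin (ω₀ / 2) / s) * x
        - (ω₀ ^ 2 * Real.cos (ω₀ / 2) * Real.cos (ω₀ * (1 - x))
            + Real.sin (ω₀ / 2) * (Real.sin (ω₀ * x) * u - Real.cos (ω₀ * x) * v))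
          / (2 * ω₀ * Real.sin (ω₀ / 2) * s * t) := funext hg
  subst hgf
  have hsin : Real.sin ω₀ = 2 * Real.sin (ω₀ / 2) * Real.cos (ω₀ / 2) := by
    have h := Real.sin_two_mul (ω₀ / 2)
    rwa [show 2 * (ω₀ / 2) = ω₀ by ring] at h
  have hcos : Real.cos ω₀ = 1 - 2 * Real.sin (ω₀ / 2) ^ 2 := by
    have h := Real.cos_two_mul (ω₀ / 2); rw [show 2 * (ω₀ / 2) = ω₀ by ring] at h
    linarith [Real.sin_sq_add_cos_sq (ω₀ / 2)]
  have hpy : Real.sin (ω₀ / 2) ^ 2 + Real.cos (ω₀ / 2) ^ 2 = 1 := Real.sin_sq_add_cos_sq _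
  refine ⟨?_, ?_, ?_, ?_⟩
  · subst hs ht hu hv
    simp only [mul_zero, mul_one, sub_zero, Real.sin_zero, Real.cos_zero]
    rw [hsin, hcos] at hu0 hv0 ⊢
    set S := Real.sin (ω₀ / 2) with hSd
    set C := Real.cos (ω₀ / 2) with hCd
    have hu0' : ω₀ * (2 * S * C) - 2 * (2 * S ^ 2) ≠ 0 := fun h => hu0 (by linear_combination h)
    have hs1 : C * ω₀ - 2 * S ≠ 0 := fun h => hs0 (by linear_combination -h)
    simp only [sub_sub_cancel] at hu0 hv0 ⊢
    have hs2 : 2 * S - C * ω₀ ≠ 0 := fun h => hs0 (by linear_combination h)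
    have hs3 : S * 2 - ω₀ * C ≠ 0 := fun h => hs0 (by linear_combination h)
    have ht1 : 2 * S + C * ω₀ ≠ 0 := fun h => ht0 (by linear_combination h)
    have ht2 : S * 2 + ω₀ * C ≠ 0 := fun h => ht0 (by linear_combination h)
    field_simp [hu0', hs0, ht0, hs1, hs2, hs3, ht1, ht2]
    linear_combination (4*ω₀*S^2 - 2*ω₀^2*S*C) * hpy
  · have H := g2_key ω₀ ((Real.sin ω₀ - ω₀ * Real.cos ω₀) / (ω₀ * u)) (Real.sin (ω₀ / 2) / s)
      (ω₀ ^ 2 * Real.cos (ω₀ / 2)) (Real.sin (ω₀ / 2)) u v (2 * ω₀ * Real.sin (ω₀ / 2) * s * t) 0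
    convert H using 1
    subst hs ht hu hv
    simp only [mul_zero, mul_one, sub_zero, Real.sin_zero, Real.cos_zero]
    rw [hsin, hcos] at hu0 hv0 ⊢
    set S := Real.sin (ω₀ / 2) with hSd
    set C := Real.cos (ω₀ / 2) with hCd
    have hu0' : ω₀ * (2 * S * C) - 2 * (2 * S ^ 2) ≠ 0 := fun h => hu0 (by linear_combination h)
    have hs1 : C * ω₀ - 2 * S ≠ 0 := fun h => hs0 (by linear_combination -h)
    simp only [sub_sub_cancel] at hu0 hv0 ⊢
    have hs2 : 2 * S - C * ω₀ ≠ 0 := fun h => hs0 (by linear_combination h)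
    have hs3 : S * 2 - ω₀ * C ≠ 0 := fun h => hs0 (by linear_combination h)
    have ht1 : 2 * S + C * ω₀ ≠ 0 := fun h => ht0 (by linear_combination h)
    have ht2 : S * 2 + ω₀ * C ≠ 0 := fun h => ht0 (by linear_combination h)
    field_simp [hu0', hs0, ht0, hs1, hs2, hs3, ht1, ht2]
    linear_combination (0:ℝ) * hpy
  · subst hs ht hu hv
    simp only [mul_zero, mul_one, sub_self, Real.sin_zero, Real.cos_zero]
    rw [hsin, hcos] at hu0 hv0 ⊢
    set S := Real.sin (ω₀ / 2) with hSd
    set C := Real.cos (ω₀ / 2) with hCd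
    have hu0' : ω₀ * (2 * S * C) - 2 * (2 * S ^ 2) ≠ 0 := fun h => hu0 (by linear_combination h)
    have hs1 : C * ω₀ - 2 * S ≠ 0 := fun h => hs0 (by linear_combination -h)
    simp only [sub_sub_cancel] at hu0 hv0 ⊢
    have hs2 : 2 * S - C * ω₀ ≠ 0 := fun h => hs0 (by linear_combination h)
    have hs3 : S * 2 - ω₀ * C ≠ 0 := fun h => hs0 (by linear_combination h)
    have ht1 : 2 * S + C * ω₀ ≠ 0 := fun h => ht0 (by linear_combination h)
    have ht2 : S * 2 + ω₀ * C ≠ 0 := fun h => ht0 (by linear_combination h)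
    field_simp [hu0', hs0, ht0, hs1, hs2, hs3, ht1, ht2]
    linear_combination (4*ω₀*S^2 + 8*ω₀*S^4 - 2*ω₀^2*S*C - 4*ω₀^2*S^3*C) * hpy
  · have H := g2_key ω₀ ((Real.sin ω₀ - ω₀ * Real.cos ω₀) / (ω₀ * u)) (Real.sin (ω₀ / 2) / s)
      (ω₀ ^ 2 * Real.cos (ω₀ / 2)) (Real.sin (ω₀ / 2)) u v (2 * ω₀ * Real.sin (ω₀ / 2) * s * t) 1
    convert H using 1
    subst hs ht hu hv
    simp only [mul_zero, mul_one, sub_self, Real.sin_zero, Real.cos_zero]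
    rw [hsin, hcos] at hu0 hv0 ⊢
    set S := Real.sin (ω₀ / 2) with hSd
    set C := Real.cos (ω₀ / 2) with hCd
    have hu0' : ω₀ * (2 * S * C) - 2 * (2 * S ^ 2) ≠ 0 := fun h => hu0 (by linear_combination h)
    have hs1 : C * ω₀ - 2 * S ≠ 0 := fun h => hs0 (by linear_combination -h)
    simp only [sub_sub_cancel] at hu0 hv0 ⊢
    have hs2 : 2 * S - C * ω₀ ≠ 0 := fun h => hs0 (by linear_combination h)
    have hs3 : S * 2 - ω₀ * C ≠ 0 := fun h => hs0 (by linear_combination h)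
    have ht1 : 2 * S + C * ω₀ ≠ 0 := fun h => ht0 (by linear_combination h)
    have ht2 : S * 2 + ω₀ * C ≠ 0 := fun h => ht0 (by linear_combination h)
    field_simp [hu0', hs0, ht0, hs1, hs2, hs3, ht1, ht2]
    linear_combination (8*S^3) * hpy
end MainProof
end
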